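/- Let z ∈ ℝ, let g be a real polynomial with g(z) ≠ 0, let k < p be natural numbers, let α : ℕ → ℝ satisfy α_{k+1} ≠ 0, and let f(ξ) = Σ_{m=k+1}^{p} α_m ξ^m. Then, as δ → 0⁺, the Rayleigh-type ratio [∫_z^{z+δ}∫_0^δ ((g′(ξ₁))²(f(ξ₂))² + (g(ξ₁))²(f′(ξ₂))²) dξ₂ dξ₁] / [∫_z^{z+δ}∫_0^δ g(ξ₁)f(ξ₂) dξ₂ dξ₁] is Θ(δ^{k-1}) (exponent taken in ℤ). -/

import Mathlib

open Topology Asymptotics Polynomial Filter intervalIntegral MeasureTheory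


lemma aux_bigO_pow {I : ℝ → ℝ} {n : ℕ} {c : ℝ}
    (h : Filter.Tendsto (fun δ => I δ / δ ^ n) (𝓝[>] (0:ℝ)) (𝓝 c)) :
    I =O[𝓝[>] (0:ℝ)] fun δ => δ ^ n := by
  have he : ∀ᶠ δ in 𝓝[>] (0:ℝ), I δ = (I δ / δ ^ n) * δ ^ n := by
    filter_upwards [self_mem_nhdsWithin] with δ hδ
    have : (δ:ℝ) ^ n ≠ 0 := pow_ne_zero _ (ne_of_gt hδ)
    field_simp
  calc I =ᶠ[𝓝[>] (0:ℝ)] fun δ => (I δ / δ ^ n) * δ ^ n := he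
    _ =O[𝓝[>] (0:ℝ)] fun δ => 1 * δ ^ n :=
        (h.isBigO_one ℝ).mul (isBigO_refl _ _)
    _ = fun δ => δ ^ n := by funext δ; ring

lemma aux_theta_pow {I : ℝ → ℝ} {n : ℕ} {c : ℝ} (hc : c ≠ 0)
    (h : Filter.Tendsto (fun δ => I δ / δ ^ n) (𝓝[>] (0:ℝ)) (𝓝 c)) :
    I =Θ[𝓝[>] (0:ℝ)] fun δ => δ ^ n := by
  have he : ∀ᶠ δ in 𝓝[>] (0:ℝ), I δ = (I δ / δ ^ n) * δ ^ n := by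
    filter_upwards [self_mem_nhdsWithin] with δ hδ
    have : (δ:ℝ) ^ n ≠ 0 := pow_ne_zero _ (ne_of_gt hδ)
    field_simp
  have h1 : (fun δ : ℝ => I δ / δ ^ n) =Θ[𝓝[>] (0:ℝ)] (fun _ => (1:ℝ)) := by
    constructor
    · exact h.isBigO_one ℝ
    · have hev : ∀ᶠ δ in 𝓝[>] (0:ℝ), |c| / 2 < |I δ / δ ^ n| :=
        (h.abs).eventually (eventually_gt_nhds (by
          have := abs_pos.mpr hc; linarith))
      refine Asymptotics.IsBigO.of_bound (2 / |c|) ?_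
      filter_upwards [hev] with δ hδ
      have hcpos : (0:ℝ) < |c| := abs_pos.mpr hc
      rw [norm_one, Real.norm_eq_abs, div_mul_eq_mul_div, le_div_iff₀ hcpos]
      nlinarith [abs_nonneg (I δ / δ ^ n)]
  calc I =ᶠ[𝓝[>] (0:ℝ)] fun δ => (I δ / δ ^ n) * δ ^ n := he
    _ =Θ[𝓝[>] (0:ℝ)] fun δ => 1 * δ ^ n := h1.mul (isTheta_rfl)
    _ = fun δ => δ ^ n := by funext δ; ring


lemma aux_ftc {w : ℝ → ℝ} (hw : Continuous w) (z : ℝ) (δ : ℝ) :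
    HasDerivAt (fun x : ℝ => ∫ t in z..(z + x), w t) (w (z + δ)) δ := by
  have h1 : HasDerivAt (fun x : ℝ => ∫ t in z..x, w t) (w (z + δ)) (z + δ) :=
    intervalIntegral.integral_hasDerivAt_right (hw.intervalIntegrable _ _)
      (hw.stronglyMeasurableAtFilter _ _) hw.continuousAt
  have h2 : HasDerivAt (fun x : ℝ => z + x) 1 δ := (hasDerivAt_id δ).const_add z
  simpa [Function.comp_def] using h1.comp δ h2

lemma aux_tendsto_shift {w : ℝ → ℝ} (hw : Continuous w) (z : ℝ) :
    Filter.Tendsto (fun δ : ℝ => (∫ t in z..(z + δ), w t) / δ ^ 1)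
      (𝓝[>] (0:ℝ)) (𝓝 (w z)) := by
  simp only [pow_one]
  apply HasDerivAt.lhopital_zero_nhdsGT
    (f' := fun δ => w (z + δ)) (g' := fun _ => (1:ℝ))
  · exact Filter.Eventually.of_forall fun δ => aux_ftc hw z δ
  · exact Filter.Eventually.of_forall fun δ => hasDerivAt_id δ
  · exact Filter.Eventually.of_forall fun δ => one_ne_zero
  · have hc : Continuous fun δ : ℝ => ∫ t in z..(z + δ), w t :=
      continuous_iff_continuousAt.mpr fun δ => (aux_ftc hw z δ).continuousAt
    have h0 : Filter.Tendsto (fun δ : ℝ => ∫ t in z..(z + δ), w t) (𝓝[>] (0:ℝ))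
        (𝓝 (∫ t in z..(z + 0), w t)) := (hc.tendsto 0).mono_left nhdsWithin_le_nhds
    simpa using h0
  · exact tendsto_nhdsWithin_of_tendsto_nhds tendsto_id
  · have : Filter.Tendsto (fun δ : ℝ => w (z + δ)) (𝓝 (0:ℝ)) (𝓝 (w z)) := by
      have h2 : Continuous fun t : ℝ => w (z + t) := by fun_prop
      simpa using h2.tendsto 0
    simpa using tendsto_nhdsWithin_of_tendsto_nhds this

lemma aux_tendsto_pow_mul {w : ℝ → ℝ} (hw : Continuous w) (n : ℕ) :
    Filter.Tendsto (fun δ : ℝ => (∫ t in (0:ℝ)..δ, t ^ n * w t) / δ ^ (n + 1))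
      (𝓝[>] (0:ℝ)) (𝓝 (w 0 / (n + 1))) := by
  have hwn : Continuous fun t : ℝ => t ^ n * w t := by fun_prop
  apply HasDerivAt.lhopital_zero_nhdsGT
    (f' := fun δ => δ ^ n * w δ) (g' := fun δ => (n + 1 : ℝ) * δ ^ n)
  · refine Filter.Eventually.of_forall fun δ => ?_
    have := aux_ftc hwn 0 δ
    simpa using this
  · refine Filter.Eventually.of_forall fun δ => ?_
    have := hasDerivAt_pow (n + 1) δ
    simpa using this
  · filter_upwards [self_mem_nhdsWithin] with δ hδ
    exact mul_ne_zero (by positivity) (pow_ne_zero _ (ne_of_gt hδ))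
  · have hc : Continuous fun δ : ℝ => ∫ t in (0:ℝ)..δ, t ^ n * w t := by
      apply continuous_iff_continuousAt.mpr fun δ => ?_
      have := (aux_ftc hwn 0 δ).continuousAt
      simpa using this
    have h0 : Filter.Tendsto (fun δ : ℝ => ∫ t in (0:ℝ)..δ, t ^ n * w t)
        (𝓝[>] (0:ℝ)) (𝓝 (∫ t in (0:ℝ)..(0:ℝ), t ^ n * w t)) :=
      (hc.tendsto 0).mono_left nhdsWithin_le_nhds
    simpa using h0
  · have h1 : Filter.Tendsto (fun δ : ℝ => δ ^ (n + 1)) (𝓝 (0:ℝ)) (𝓝 ((0:ℝ) ^ (n + 1))) :=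
      (continuous_pow (n + 1)).tendsto 0
    simpa using h1.mono_left nhdsWithin_le_nhds
  · have key : ∀ᶠ δ in 𝓝[>] (0:ℝ),
        w δ / (n + 1) = δ ^ n * w δ / ((n + 1 : ℝ) * δ ^ n) := by
      filter_upwards [self_mem_nhdsWithin] with δ hδ
      have h2 : (δ:ℝ) ^ n ≠ 0 := pow_ne_zero _ (ne_of_gt hδ)
      field_simp
    have h3 : Filter.Tendsto (fun δ : ℝ => w δ / (n + 1)) (𝓝[>] (0:ℝ))
        (𝓝 (w 0 / (n + 1))) :=
      ((hw.div_const _).tendsto 0).mono_left nhdsWithin_le_nhds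
    exact h3.congr' key

open Topology Asymptotics Polynomial

theorem rayleigh_ratio_asymptotics_config_b (z : ℝ)
    (g : Polynomial ℝ) (hg : g.eval z ≠ 0)
    (k p : ℕ) (hkp : k < p) (α : ℕ → ℝ) (hα : α (k + 1) ≠ 0) :
    (fun δ : ℝ =>
        (∫ ξ₁ in z..(z + δ), ∫ ξ₂ in (0:ℝ)..δ,
          ((Polynomial.derivative g).eval ξ₁) ^ 2 *
            (∑ m ∈ Finset.Icc (k + 1) p, α m * ξ₂ ^ m) ^ 2 +
          (g.eval ξ₁) ^ 2 *
            (deriv (fun t : ℝ => ∑ m ∈ Finset.Icc (k + 1) p, α m * t ^ m) ξ₂) ^ 2) /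
        (∫ ξ₁ in z..(z + δ), ∫ ξ₂ in (0:ℝ)..δ,
          g.eval ξ₁ * ∑ m ∈ Finset.Icc (k + 1) p, α m * ξ₂ ^ m))
      =Θ[𝓝[>] (0:ℝ)] (fun δ : ℝ => δ ^ ((k : ℤ) - 1)) := by
  -- helper functions
  set h₁ : ℝ → ℝ := fun t => ∑ m ∈ Finset.Icc (k + 1) p, α m * t ^ (m - (k + 1)) with hh₁
  set h₂ : ℝ → ℝ := fun t => ∑ m ∈ Finset.Icc (k + 1) p, α m * m * t ^ (m - 1 - k) with hh₂
  have hh1c : Continuous h₁ := continuous_finset_sum _ fun m _ => by fun_prop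
  have hh2c : Continuous h₂ := continuous_finset_sum _ fun m _ => by fun_prop
  have hmem : k + 1 ∈ Finset.Icc (k + 1) p := Finset.mem_Icc.mpr ⟨le_rfl, hkp⟩
  have hh10 : h₁ 0 = α (k + 1) := by
    simp only [hh₁]
    rw [Finset.sum_eq_single (k + 1)]
    · simp
    · intro m hm hne
      have h1 : k + 1 ≤ m := (Finset.mem_Icc.mp hm).1
      rw [zero_pow (by omega : m - (k + 1) ≠ 0), mul_zero]
    · intro hcon; exact absurd hmem hcon
  have hh20 : h₂ 0 = α (k + 1) * (k + 1) := by
    simp only [hh₂]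
    rw [Finset.sum_eq_single (k + 1)]
    · push_cast; simp
    · intro m hm hne
      have h1 : k + 1 ≤ m := (Finset.mem_Icc.mp hm).1
      rw [zero_pow (by omega : m - 1 - k ≠ 0), mul_zero]
    · intro hcon; exact absurd hmem hcon
  have hh10' : h₁ 0 ≠ 0 := by rw [hh10]; exact hα
  have hh20' : h₂ 0 ≠ 0 := by
    rw [hh20]
    exact mul_ne_zero hα (by positivity)
  -- derivative of f
  have hfderiv : (deriv fun t : ℝ => ∑ m ∈ Finset.Icc (k + 1) p, α m * t ^ m)
      = fun t : ℝ => ∑ m ∈ Finset.Icc (k + 1) p, α m * (m * t ^ (m - 1)) := by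
    funext t
    exact HasDerivAt.deriv (HasDerivAt.fun_sum fun m _ => (hasDerivAt_pow m t).const_mul (α m))
  -- pointwise factorizations
  have hfeq : ∀ t : ℝ, (∑ m ∈ Finset.Icc (k + 1) p, α m * t ^ m) = t ^ (k + 1) * h₁ t := by
    intro t
    rw [hh₁, Finset.mul_sum]
    refine Finset.sum_congr rfl fun m hm => ?_
    have h1 : k + 1 ≤ m := (Finset.mem_Icc.mp hm).1
    have h2 : t ^ (k + 1) * t ^ (m - (k + 1)) = t ^ m := by
      rw [← pow_add]; congr 1; omega
    calc α m * t ^ m = α m * (t ^ (k + 1) * t ^ (m - (k + 1))) := by rw [h2]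
      _ = t ^ (k + 1) * (α m * t ^ (m - (k + 1))) := by ring
  have hdeq : ∀ t : ℝ, (∑ m ∈ Finset.Icc (k + 1) p, α m * (m * t ^ (m - 1)))
      = t ^ k * h₂ t := by
    intro t
    rw [hh₂, Finset.mul_sum]
    refine Finset.sum_congr rfl fun m hm => ?_
    have h1 : k + 1 ≤ m := (Finset.mem_Icc.mp hm).1
    have h2 : t ^ k * t ^ (m - 1 - k) = t ^ (m - 1) := by
      rw [← pow_add]; congr 1; omega
    calc α m * (m * t ^ (m - 1)) = α m * (m * (t ^ k * t ^ (m - 1 - k))) := by rw [h2]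
      _ = t ^ k * (α m * m * t ^ (m - 1 - k)) := by ring
  have e1 : ∀ t : ℝ, (∑ m ∈ Finset.Icc (k + 1) p, α m * t ^ m) ^ 2
      = t ^ (2 * k + 2) * (h₁ t) ^ 2 := by
    intro t
    rw [hfeq t, mul_pow, ← pow_mul, show (k + 1) * 2 = 2 * k + 2 by ring]
  have e2 : ∀ t : ℝ, (∑ m ∈ Finset.Icc (k + 1) p, α m * (m * t ^ (m - 1))) ^ 2
      = t ^ (2 * k) * (h₂ t) ^ 2 := by
    intro t
    rw [hdeq t, mul_pow, ← pow_mul, show k * 2 = 2 * k by ring]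
  -- the six 1-D integrals
  set Af : ℝ → ℝ := fun δ => ∫ t in z..(z + δ), ((derivative g).eval t) ^ 2 with hAf
  set Cf : ℝ → ℝ := fun δ => ∫ t in z..(z + δ), (g.eval t) ^ 2 with hCf
  set Ef : ℝ → ℝ := fun δ => ∫ t in z..(z + δ), g.eval t with hEf
  set Bf : ℝ → ℝ := fun δ => ∫ t in (0:ℝ)..δ, t ^ (2 * k + 2) * (h₁ t) ^ 2 with hBf
  set Df : ℝ → ℝ := fun δ => ∫ t in (0:ℝ)..δ, t ^ (2 * k) * (h₂ t) ^ 2 with hDf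
  set Ff : ℝ → ℝ := fun δ => ∫ t in (0:ℝ)..δ, t ^ (k + 1) * h₁ t with hFf
  -- rewriting the double integrals
  have hnum : ∀ δ : ℝ,
      (∫ ξ₁ in z..(z + δ), ∫ ξ₂ in (0:ℝ)..δ,
          ((derivative g).eval ξ₁) ^ 2 * (∑ m ∈ Finset.Icc (k + 1) p, α m * ξ₂ ^ m) ^ 2 +
          (g.eval ξ₁) ^ 2 *
            (deriv (fun t : ℝ => ∑ m ∈ Finset.Icc (k + 1) p, α m * t ^ m) ξ₂) ^ 2)
      = Af δ * Bf δ + Cf δ * Df δ := by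
    intro δ
    have step1 : ∀ ξ₁ : ℝ,
        (∫ ξ₂ in (0:ℝ)..δ,
          ((derivative g).eval ξ₁) ^ 2 * (∑ m ∈ Finset.Icc (k + 1) p, α m * ξ₂ ^ m) ^ 2 +
          (g.eval ξ₁) ^ 2 *
            (deriv (fun t : ℝ => ∑ m ∈ Finset.Icc (k + 1) p, α m * t ^ m) ξ₂) ^ 2)
        = ((derivative g).eval ξ₁) ^ 2 * Bf δ + (g.eval ξ₁) ^ 2 * Df δ := by
      intro ξ₁
      have hrw : (fun ξ₂ : ℝ =>
          ((derivative g).eval ξ₁) ^ 2 * (∑ m ∈ Finset.Icc (k + 1) p, α m * ξ₂ ^ m) ^ 2 +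
          (g.eval ξ₁) ^ 2 *
            (deriv (fun t : ℝ => ∑ m ∈ Finset.Icc (k + 1) p, α m * t ^ m) ξ₂) ^ 2)
          = fun ξ₂ : ℝ =>
          ((derivative g).eval ξ₁) ^ 2 * (ξ₂ ^ (2 * k + 2) * (h₁ ξ₂) ^ 2) +
          (g.eval ξ₁) ^ 2 * (ξ₂ ^ (2 * k) * (h₂ ξ₂) ^ 2) := by
        funext ξ₂
        rw [hfderiv, e1 ξ₂, e2 ξ₂]
      rw [hrw, intervalIntegral.integral_add
          ((continuous_const.fun_mul ((continuous_pow _).fun_mul (hh1c.fun_pow 2))).intervalIntegrable _ _)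
          ((continuous_const.fun_mul ((continuous_pow _).fun_mul (hh2c.fun_pow 2))).intervalIntegrable _ _),
        intervalIntegral.integral_const_mul, intervalIntegral.integral_const_mul]
    simp only [step1]
    rw [intervalIntegral.integral_add
        ((((derivative g).continuous.fun_pow 2).fun_mul continuous_const).intervalIntegrable _ _)
        (((g.continuous.fun_pow 2).fun_mul continuous_const).intervalIntegrable _ _),
      intervalIntegral.integral_mul_const, intervalIntegral.integral_mul_const]
  have hden : ∀ δ : ℝ,
      (∫ ξ₁ in z..(z + δ), ∫ ξ₂ in (0:ℝ)..δ,
          g.eval ξ₁ * ∑ m ∈ Finset.Icc (k + 1) p, α m * ξ₂ ^ m)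
      = Ef δ * Ff δ := by
    intro δ
    have step1 : ∀ ξ₁ : ℝ,
        (∫ ξ₂ in (0:ℝ)..δ, g.eval ξ₁ * ∑ m ∈ Finset.Icc (k + 1) p, α m * ξ₂ ^ m)
        = g.eval ξ₁ * Ff δ := by
      intro ξ₁
      have hrw : (fun ξ₂ : ℝ => g.eval ξ₁ * ∑ m ∈ Finset.Icc (k + 1) p, α m * ξ₂ ^ m)
          = fun ξ₂ : ℝ => g.eval ξ₁ * (ξ₂ ^ (k + 1) * h₁ ξ₂) := by
        funext ξ₂; rw [hfeq ξ₂]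
      rw [hrw, intervalIntegral.integral_const_mul]
    simp only [step1]
    rw [intervalIntegral.integral_mul_const]
  -- asymptotics of factors
  have hA : Af =O[𝓝[>] (0:ℝ)] fun δ : ℝ => δ ^ 1 :=
    aux_bigO_pow (aux_tendsto_shift ((derivative g).continuous.pow 2) z)
  have hC : Cf =Θ[𝓝[>] (0:ℝ)] fun δ : ℝ => δ ^ 1 :=
    aux_theta_pow (pow_ne_zero 2 hg) (aux_tendsto_shift (g.continuous.pow 2) z)
  have hE : Ef =Θ[𝓝[>] (0:ℝ)] fun δ : ℝ => δ ^ 1 :=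
    aux_theta_pow hg (aux_tendsto_shift g.continuous z)
  have hB : Bf =Θ[𝓝[>] (0:ℝ)] fun δ : ℝ => δ ^ (2 * k + 2 + 1) :=
    aux_theta_pow (div_ne_zero (pow_ne_zero 2 hh10') (by positivity))
      (aux_tendsto_pow_mul (hh1c.pow 2) (2 * k + 2))
  have hD : Df =Θ[𝓝[>] (0:ℝ)] fun δ : ℝ => δ ^ (2 * k + 1) :=
    aux_theta_pow (div_ne_zero (pow_ne_zero 2 hh20') (by positivity))
      (aux_tendsto_pow_mul (hh2c.pow 2) (2 * k))
  have hF : Ff =Θ[𝓝[>] (0:ℝ)] fun δ : ℝ => δ ^ (k + 1 + 1) :=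
    aux_theta_pow (div_ne_zero hh10' (by positivity))
      (aux_tendsto_pow_mul hh1c (k + 1))
  -- products
  have hCD : (fun δ => Cf δ * Df δ) =Θ[𝓝[>] (0:ℝ)] fun δ : ℝ => δ ^ (2 * k + 2) := by
    have h := hC.mul hD
    rwa [show (fun δ : ℝ => δ ^ 1 * δ ^ (2 * k + 1)) = fun δ : ℝ => δ ^ (2 * k + 2) from
      funext fun δ => by ring] at h
  have hEF : (fun δ => Ef δ * Ff δ) =Θ[𝓝[>] (0:ℝ)] fun δ : ℝ => δ ^ (k + 3) := by
    have h := hE.mul hF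
    rwa [show (fun δ : ℝ => δ ^ 1 * δ ^ (k + 1 + 1)) = fun δ : ℝ => δ ^ (k + 3) from
      funext fun δ => by ring] at h
  have hAB : (fun δ => Af δ * Bf δ) =O[𝓝[>] (0:ℝ)] fun δ : ℝ => δ ^ (2 * k + 2) := by
    have h := hA.mul hB.isBigO
    rw [show (fun δ : ℝ => δ ^ 1 * δ ^ (2 * k + 2 + 1)) = fun δ : ℝ => δ ^ (2 * k + 4) from
      funext fun δ => by ring] at h
    refine h.trans (Asymptotics.IsBigO.of_bound 1 ?_)
    filter_upwards [Ioo_mem_nhdsGT (one_pos : (0:ℝ) < 1)] with δ hδ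
    rw [one_mul, Real.norm_eq_abs, Real.norm_eq_abs, abs_pow, abs_pow]
    exact pow_le_pow_of_le_one (abs_nonneg δ) (by rw [abs_of_pos hδ.1]; exact le_of_lt hδ.2)
      (by omega)
  -- nonnegativity for δ > 0
  have hnonneg : ∀ᶠ δ in 𝓝[>] (0:ℝ), 0 ≤ Af δ * Bf δ ∧ 0 ≤ Cf δ * Df δ := by
    filter_upwards [self_mem_nhdsWithin] with δ (hδ : 0 < δ)
    have hzz : z ≤ z + δ := by linarith
    have h0δ : (0:ℝ) ≤ δ := le_of_lt hδ
    refine ⟨mul_nonneg ?_ ?_, mul_nonneg ?_ ?_⟩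
    · exact intervalIntegral.integral_nonneg hzz fun u _ => sq_nonneg _
    · exact intervalIntegral.integral_nonneg h0δ fun u hu =>
        mul_nonneg (pow_nonneg hu.1 _) (sq_nonneg _)
    · exact intervalIntegral.integral_nonneg hzz fun u _ => sq_nonneg _
    · exact intervalIntegral.integral_nonneg h0δ fun u hu =>
        mul_nonneg (pow_nonneg hu.1 _) (sq_nonneg _)
  -- numerator theta
  have hN : (fun δ => Af δ * Bf δ + Cf δ * Df δ) =Θ[𝓝[>] (0:ℝ)]
      fun δ : ℝ => δ ^ (2 * k + 2) := by
    constructor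
    · exact hAB.add hCD.isBigO
    · refine hCD.symm.isBigO.trans (Asymptotics.IsBigO.of_bound 1 ?_)
      filter_upwards [hnonneg] with δ ⟨h1, h2⟩
      rw [one_mul, Real.norm_eq_abs, Real.norm_eq_abs, abs_of_nonneg h2,
        abs_of_nonneg (by linarith : (0:ℝ) ≤ Af δ * Bf δ + Cf δ * Df δ)]
      linarith
  -- final combination
  have hfinal := hN.div hEF
  have hfun : (fun δ : ℝ =>
        (∫ ξ₁ in z..(z + δ), ∫ ξ₂ in (0:ℝ)..δ,
          ((derivative g).eval ξ₁) ^ 2 * (∑ m ∈ Finset.Icc (k + 1) p, α m * ξ₂ ^ m) ^ 2 +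
          (g.eval ξ₁) ^ 2 *
            (deriv (fun t : ℝ => ∑ m ∈ Finset.Icc (k + 1) p, α m * t ^ m) ξ₂) ^ 2) /
        (∫ ξ₁ in z..(z + δ), ∫ ξ₂ in (0:ℝ)..δ,
          g.eval ξ₁ * ∑ m ∈ Finset.Icc (k + 1) p, α m * ξ₂ ^ m))
      = fun δ : ℝ => (Af δ * Bf δ + Cf δ * Df δ) / (Ef δ * Ff δ) := by
    funext δ; rw [hnum δ, hden δ]
  rw [hfun]
  refine hfinal.trans_eventuallyEq ?_
  filter_upwards [self_mem_nhdsWithin] with δ (hδ : 0 < δ)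
  have hδ0 : (δ:ℝ) ≠ 0 := ne_of_gt hδ
  rw [show ((k : ℤ) - 1) = ((2 * k + 2 : ℕ) : ℤ) - ((k + 3 : ℕ) : ℤ) by push_cast; ring,
    zpow_sub₀ hδ0, zpow_natCast, zpow_natCast]
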